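/- Let $T$ be a tree on vertex set $V$ and let $\mathcal{P} = \{P_1, \dots, P_r\}$ be a set of pairwise vertex-disjoint paths, each of which is a subgraph of $T$. Let $T''$ be the multigraph obtained by doubling every edge of $T$. Then $T''$ admits an Eulerian circuit $W''$ that contains each path $P_j$ as a contiguous simple subpath (each $P_j$ is traversed consecutively in one direction). -/

import Mathlib

open Finset

variable {V : Type*} [Fintype V] [DecidableEq V]

/-- symmetrized edge cost of a (possibly asymmetric) weight function -/
noncomputable def ecost (d : V → V → ℝ) : Sym2 V → ℝ :=
  Sym2.lift ⟨fun x y => (d x y + d y x) / 2, fun x y => by ring⟩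

/-- total cost of an edge set -/
noncomputable def cost (d : V → V → ℝ) (F : Finset (Sym2 V)) : ℝ :=
  ∑ e ∈ F, ecost d e

/-- edges of a cyclic tour given by a vertex list -/
def cycleEdges (l : List V) : Finset (Sym2 V) :=
  ((l.zip (l.rotate 1)).map fun p => s(p.1, p.2)).toFinset

/-- edges of a path given by a vertex list -/
def pathEdges (l : List V) : Finset (Sym2 V) :=
  (l.zipWith (fun a b => s(a, b)) l.tail).toFinset

def IsHamCycle (l : List V) : Prop := l.Nodup ∧ ∀ v : V, v ∈ l

def IsHamPath (l : List V) : Prop := l.Nodup ∧ ∀ v : V, v ∈ l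

def IsMetric (d : V → V → ℝ) : Prop :=
  (∀ x y, 0 ≤ d x y) ∧ (∀ x, d x x = 0) ∧ (∀ x y, d x y = d y x) ∧
    ∀ x y z, d x z ≤ d x y + d y z

def IsSpanningTree (E : Finset (Sym2 V)) : Prop :=
  (SimpleGraph.fromEdgeSet (E : Set (Sym2 V))).IsTree

/-- edge multiset of a walk given by its vertex list -/
def walkEdges (l : List V) : Multiset (Sym2 V) :=
  (l.zipWith (fun a b => s(a, b)) l.tail : List (Sym2 V))

/-- cost of a walk, edges counted with multiplicity -/
noncomputable def walkCost (d : V → V → ℝ) (l : List V) : ℝ :=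
  ((walkEdges l).map (ecost d)).sum

def IsClosedWalk (l : List V) : Prop := l ≠ [] ∧ l.head? = l.getLast?

/-- vertices touched by an edge set -/
def edgeVerts (F : Finset (Sym2 V)) : Finset V :=
  Finset.univ.filter fun v => ∃ e ∈ F, v ∈ e


set_option linter.unusedSectionVars false

namespace Stmt6
variable {V : Type*} [DecidableEq V]

def chain (l : List V) : List (Sym2 V) := l.zipWith (fun a b => s(a, b)) l.tail

@[simp] lemma chain_nil : chain ([] : List V) = [] := rfl
@[simp] lemma chain_single (a : V) : chain [a] = [] := rfl
@[simp] lemma chain_cons_cons (a b : V) (l : List V) :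
    chain (a :: b :: l) = s(a, b) :: chain (b :: l) := rfl

lemma walkEdges_eq [Fintype V] (l : List V) : walkEdges l = (chain l : Multiset (Sym2 V)) := rfl
lemma pathEdges_eq [Fintype V] (l : List V) : pathEdges l = (chain l).toFinset := rfl

lemma chain_cons_of_ne_nil (a : V) {l : List V} (hl : l ≠ []) :
    chain (a :: l) = s(a, l.head hl) :: chain l := by
  cases l with
  | nil => exact absurd rfl hl
  | cons b l => rfl

lemma chain_append_cons (v : V) (Y : List V) :
    ∀ X : List V, chain (X ++ v :: Y) = chain (X ++ [v]) ++ chain (v :: Y)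
  | [] => by simp
  | [x] => by simp
  | x :: y :: X => by
    simp only [List.cons_append, chain_cons_cons]
    rw [← List.cons_append, chain_append_cons v Y (y :: X)]
    simp

lemma chain_concat : ∀ (l : List V) (hl : l ≠ []) (a : V),
    chain (l ++ [a]) = chain l ++ [s(l.getLast hl, a)]
  | [x], _, a => by simp
  | x :: y :: l, _, a => by
    simp only [List.cons_append, chain_cons_cons]
    rw [← List.cons_append, chain_concat (y :: l) (by simp) a]
    simp [List.getLast]

lemma chain_reverse_perm : ∀ l : List V, (chain l.reverse).Perm (chain l)
  | [] => by simp
  | [x] => by simp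
  | a :: b :: l => by
    have h : (a :: b :: l).reverse = (b :: l).reverse ++ [a] := by simp
    rw [h, chain_concat ((b :: l).reverse) (by simp) a]
    have hgl : ((b :: l).reverse).getLast (by simp) = b := by
      rw [List.getLast_reverse]; rfl
    rw [hgl]
    refine ((chain_reverse_perm (b :: l)).append_right _).trans ?_
    rw [chain_cons_cons]
    refine (List.perm_append_singleton _ _).trans ?_
    rw [Sym2.eq_swap]

lemma mem_chain_iff_split {e : Sym2 V} : ∀ {l : List V},
    e ∈ chain l → ∃ C p q D, l = C ++ p :: q :: D ∧ e = s(p, q)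
  | [], h => by simp at h
  | [x], h => by simp at h
  | a :: b :: l, h => by
    rw [chain_cons_cons, List.mem_cons] at h
    rcases h with h | h
    · exact ⟨[], a, b, l, rfl, h⟩
    · obtain ⟨C, p, q, D, h1, h2⟩ := mem_chain_iff_split h
      exact ⟨a :: C, p, q, D, by rw [List.cons_append, ← h1], h2⟩

lemma split_mem_chain (p q : V) (D : List V) : ∀ C : List V, s(p, q) ∈ chain (C ++ p :: q :: D)
  | [] => by simp
  | [x] => by simp
  | x :: y :: C => by
    simp only [List.cons_append, chain_cons_cons, List.mem_cons]
    right
    have := split_mem_chain p q D (y :: C)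
    simpa using this

lemma mem_of_mem_chain {e : Sym2 V} {l : List V} (h : e ∈ chain l) {x : V} (hx : x ∈ e) :
    x ∈ l := by
  obtain ⟨C, p, q, D, rfl, rfl⟩ := mem_chain_iff_split h
  rw [Sym2.mem_iff] at hx
  rcases hx with rfl | rfl <;> simp


lemma infix_side {X Y S B Tl : List V} {v : V} (h2 : X ++ v :: Y = S ++ B ++ Tl)
    (hv : v ∉ B) : B <:+: X ∨ B <:+: Y := by
  have hlen : X.length + (Y.length + 1) = S.length + (B.length + Tl.length) := by
    have := congrArg List.length h2; simpa [add_assoc] using this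
  have h3 : S ++ (B ++ Tl) = X ++ v :: Y := by rw [← List.append_assoc]; exact h2.symm
  by_cases hc1 : S.length + B.length ≤ X.length
  · left
    have hpre : S ++ B <+: X :=
      List.prefix_of_prefix_length_le ⟨Tl, h2.symm⟩ ⟨v :: Y, rfl⟩ (by simpa using hc1)
    exact (List.suffix_append S B).isInfix.trans hpre.isInfix
  · by_cases hc2 : X.length < S.length
    · right
      have hsuf : B ++ Tl <:+ Y :=
        List.suffix_of_suffix_length_le ⟨S, h3⟩ ⟨X ++ [v], by simp⟩ (by simp; omega)
      exact (List.prefix_append B Tl).isInfix.trans hsuf.isInfix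
    · exfalso
      push_neg at hc1 hc2
      apply hv
      have hi : X.length < (X ++ v :: Y).length := by simp
      have e1 : (X ++ v :: Y)[X.length] = v := by
        rw [List.getElem_append_right (le_refl _)]; simp
      have hi2 : X.length - S.length < B.length := by omega
      have hi3 : X.length < (S ++ (B ++ Tl)).length := by simp; omega
      have hi4 : X.length - S.length < (B ++ Tl).length := by simp; omega
      have e3 : (X ++ v :: Y)[X.length] = (S ++ (B ++ Tl))[X.length]'hi3 :=
        List.getElem_of_eq h3.symm hi
      have e4 : (S ++ (B ++ Tl))[X.length]'hi3 = (B ++ Tl)[X.length - S.length]'hi4 :=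
        List.getElem_append_right hc2
      have e5 : (B ++ Tl)[X.length - S.length]'hi4 = B[X.length - S.length]'hi2 :=
        List.getElem_append_left hi2
      have ev : v = B[X.length - S.length]'hi2 := (e1.symm.trans e3).trans (e4.trans e5)
      rw [ev]
      exact List.getElem_mem _

lemma countBound (v : V) : ∀ (l : List V) (a : V),
    Multiset.countP (fun e => v ∈ e ∧ ¬ e.IsDiag) (chain (a :: l) : Multiset (Sym2 V)) +
      ((if a = v then 1 else 0) + (if (a :: l).getLast (by simp) = v then 1 else 0)) ≤
      2 * (a :: l).count v
  | [], a => by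
    by_cases h : a = v <;> simp [h, List.count_cons]
  | b :: l, a => by
    have IH := countBound v l b
    have hgl : (a :: b :: l).getLast (by simp) = (b :: l).getLast (by simp) :=
      List.getLast_cons (by simp)
    have hcnt : (a :: b :: l).count v = (if a = v then 1 else 0) + (b :: l).count v := by
      rw [List.count_cons]; by_cases h : a = v <;> simp [h, add_comm]
    have hpush : Multiset.countP (fun e => v ∈ e ∧ ¬ e.IsDiag)
        (chain (a :: b :: l) : Multiset (Sym2 V)) =
        Multiset.countP (fun e => v ∈ e ∧ ¬ e.IsDiag) (chain (b :: l) : Multiset (Sym2 V)) +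
        (if (v ∈ s(a, b) ∧ ¬ (s(a, b) : Sym2 V).IsDiag) then 1 else 0) := by
      rw [chain_cons_cons, ← Multiset.cons_coe, Multiset.countP_cons]
    have hkey : (if (v ∈ s(a, b) ∧ ¬ (s(a, b) : Sym2 V).IsDiag) then 1 else 0) ≤
        (if a = v then 1 else 0) + (if b = v then 1 else 0) := by
      by_cases h : v ∈ s(a, b) ∧ ¬ (s(a, b) : Sym2 V).IsDiag
      · rw [if_pos h]
        rcases Sym2.mem_iff.mp h.1 with rfl | rfl
        · simp
        · simp
      · rw [if_neg h]; exact Nat.zero_le _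
    rw [hpush, hcnt, hgl]
    omega

lemma count_two {W : List V} (hW : W ≠ []) (hcl : W.head? = W.getLast?) {a b v : V}
    (hab : a ≠ b) (hav : a ≠ v) (hbv : b ≠ v)
    (h1 : 2 ≤ Multiset.count s(a, v) (chain W : Multiset (Sym2 V)))
    (h2 : 2 ≤ Multiset.count s(b, v) (chain W : Multiset (Sym2 V))) :
    2 ≤ W.count v := by
  obtain ⟨w, l, rfl⟩ : ∃ w l, W = w :: l := by
    cases W with
    | nil => exact absurd rfl hW
    | cons w l => exact ⟨w, l, rfl⟩
  have hne : s(a, v) ≠ s(b, v) := by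
    intro h
    rw [Sym2.eq_iff] at h
    rcases h with ⟨h1', _⟩ | ⟨_, h2'⟩
    · exact hab h1'
    · exact hbv h2'.symm
  have hrep : Multiset.replicate 2 s(a, v) + Multiset.replicate 2 s(b, v) ≤
      Multiset.filter (fun e => v ∈ e ∧ ¬ e.IsDiag) (chain (w :: l) : Multiset (Sym2 V)) := by
    rw [Multiset.le_iff_count]
    intro x
    rw [Multiset.count_filter, Multiset.count_add, Multiset.count_replicate,
      Multiset.count_replicate]
    rcases eq_or_ne x s(a, v) with rfl | hx1
    · rw [if_pos rfl, if_neg (fun h => hne h.symm), if_pos ⟨by simp, by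
        simp only [Sym2.isDiag_iff_proj_eq]; exact hav⟩]
      omega
    · rcases eq_or_ne x s(b, v) with rfl | hx2
      · rw [if_neg hne, if_pos rfl, if_pos ⟨by simp, by
          simp only [Sym2.isDiag_iff_proj_eq]; exact hbv⟩]
        omega
      · rw [if_neg (fun h => hx1 h.symm), if_neg (fun h => hx2 h.symm)]
        split <;> omega
  have hcard : 4 ≤ Multiset.countP (fun e => v ∈ e ∧ ¬ e.IsDiag)
      (chain (w :: l) : Multiset (Sym2 V)) := by
    have := Multiset.card_le_card hrep
    simpa [Multiset.countP_eq_card_filter] using this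
  have hlast : (w :: l).getLast (by simp) = w := by
    have h1' : (w :: l).getLast? = some ((w :: l).getLast (by simp)) :=
      List.getLast?_eq_getLast (by simp)
    rw [← hcl] at h1'
    simpa using h1'.symm
  have hb := countBound v l w
  rw [hlast] at hb
  by_cases hwv : w = v
  · rw [if_pos hwv] at hb; omega
  · rw [if_neg hwv] at hb; omega


lemma side_all {W X Y : List V} {v : V} (hW : W = X ++ v :: Y) {B : List V}
    (hB : B <:+: W) (hv : v ∉ B) : B <:+: X ++ [v] ∨ B <:+: v :: Y := by
  obtain ⟨S, Tl, hS⟩ := hB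
  have heq : X ++ v :: Y = S ++ B ++ Tl := by rw [← hW, hS]
  rcases infix_side heq hv with h | h
  · exact Or.inl (h.trans (List.prefix_append X [v]).isInfix)
  · exact Or.inr (h.trans (List.suffix_cons v Y).isInfix)

lemma ins (W : List V) {r : ℕ} (B : Fin r → List V)
    (hinf : ∀ j, B j <:+: W) (hnd : ∀ j, (B j).Nodup)
    (hdisj : ∀ i j, i ≠ j → Disjoint (B i).toFinset (B j).toFinset)
    (v : V) (hv : v ∈ W)
    (hcnt : ∀ j, v ∈ B j → (B j).head? ≠ some v → (B j).getLast? ≠ some v → 2 ≤ W.count v) :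
    ∃ X Y, W = X ++ v :: Y ∧ (∀ j, B j <:+: X ++ [v] ∨ B j <:+: v :: Y) ∧
      (∀ j, (B j).head? = some v → B j <+: v :: Y) ∧
      (∀ j, (B j).getLast? = some v → B j <:+ X ++ [v]) := by
  classical
  by_cases hex : ∃ j, v ∈ B j
  · obtain ⟨j0, hvj0⟩ := hex
    have huniq : ∀ k, k ≠ j0 → v ∉ B k := by
      intro k hk hvk
      exact Finset.disjoint_left.mp (hdisj k j0 hk) (List.mem_toFinset.mpr hvk)
        (List.mem_toFinset.mpr hvj0)
    obtain ⟨S, Tl, hSTl⟩ := hinf j0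
    by_cases hh : (B j0).head? = some v
    · obtain ⟨R, hB⟩ : ∃ R, B j0 = v :: R := by
        cases hBj : B j0 with
        | nil => rw [hBj] at hh; simp at hh
        | cons x R =>
          rw [hBj] at hh; simp at hh; exact ⟨R, by rw [hh]⟩
      have hvR : v ∉ R := by
        have := hnd j0; rw [hB, List.nodup_cons] at this; exact this.1
      have hW : W = S ++ v :: (R ++ Tl) := by rw [← hSTl, hB]; simp
      refine ⟨S, R ++ Tl, hW, ?_, ?_, ?_⟩
      · intro j
        by_cases hj : j = j0
        · subst hj; right; rw [hB]; exact ⟨[], Tl, by simp⟩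
        · exact side_all hW (hinf j) (huniq j hj)
      · intro j hj
        by_cases hjne : j = j0
        · subst hjne; rw [hB]; exact ⟨Tl, by simp⟩
        · exact absurd (List.mem_of_mem_head? hj) (huniq j hjne)
      · intro j hj
        by_cases hjne : j = j0
        · subst hjne
          have hR : R = [] := by
            by_contra hR
            have h1 : (B j).getLast? = some ((v :: R).getLast (by simp)) := by
              rw [hB]; exact List.getLast?_eq_getLast (by simp)
            rw [hj] at h1
            have h2 : (v :: R).getLast (by simp) = R.getLast hR := List.getLast_cons hR
            have h3 : R.getLast hR ∈ R := List.getLast_mem hR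
            rw [h2] at h1
            have : R.getLast hR = v := by simpa using h1.symm
            rw [this] at h3
            exact hvR h3
          rw [hB, hR]
          exact ⟨S, rfl⟩
        · exact absurd (List.mem_of_mem_getLast? hj) (huniq j hjne)
    · by_cases hl : (B j0).getLast? = some v
      · have hBne : B j0 ≠ [] := by
          intro h; rw [h] at hl; simp at hl
        have hglv : (B j0).getLast hBne = v := by
          have := List.getLast?_eq_getLast hBne
          rw [hl] at this; simpa using this.symm
        have hB : B j0 = (B j0).dropLast ++ [v] := by
          conv_lhs => rw [← List.dropLast_append_getLast hBne]
          rw [hglv]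
        set R := (B j0).dropLast with hR
        have hW : W = (S ++ R) ++ v :: Tl := by rw [← hSTl]; conv_lhs => rw [hB]
                                                simp
        refine ⟨S ++ R, Tl, hW, ?_, ?_, ?_⟩
        · intro j
          by_cases hj : j = j0
          · subst hj; left
            refine List.IsSuffix.isInfix ⟨S, ?_⟩
            conv_lhs => rw [hB]
            simp
          · exact side_all hW (hinf j) (huniq j hj)
        · intro j hj
          by_cases hjne : j = j0
          · subst hjne; exact absurd hj hh
          · exact absurd (List.mem_of_mem_head? hj) (huniq j hjne)
        · intro j hj
          by_cases hjne : j = j0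
          · subst hjne
            refine ⟨S, ?_⟩
            conv_lhs => rw [hB]
            simp
          · exact absurd (List.mem_of_mem_getLast? hj) (huniq j hjne)
      · have hc : 2 ≤ W.count v := hcnt j0 hvj0 hh hl
        have hcB : (B j0).count v = 1 := List.count_eq_one_of_mem (hnd j0) hvj0
        have hsum : 1 ≤ S.count v + Tl.count v := by
          have : W.count v = S.count v + (B j0).count v + Tl.count v := by
            rw [← hSTl]; simp [List.count_append, add_assoc]
          omega
        have hmem : v ∈ S ∨ v ∈ Tl := by
          rcases Nat.lt_or_ge 0 (S.count v) with h | h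
          · exact Or.inl (List.count_pos_iff.mp h)
          · right; apply List.count_pos_iff.mp; omega
        rcases hmem with hS | hT
        · obtain ⟨S1, S2, rfl⟩ := List.append_of_mem hS
          have hW : W = S1 ++ v :: (S2 ++ B j0 ++ Tl) := by
            rw [← hSTl]; simp
          refine ⟨S1, S2 ++ B j0 ++ Tl, hW, ?_, ?_, ?_⟩
          · intro j
            by_cases hj : j = j0
            · subst hj; right
              exact (show B j <:+: S2 ++ B j ++ Tl from ⟨S2, Tl, by simp⟩).trans
                (List.suffix_cons v _).isInfix
            · exact side_all hW (hinf j) (huniq j hj)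
          · intro j hj
            by_cases hjne : j = j0
            · subst hjne; exact absurd hj hh
            · exact absurd (List.mem_of_mem_head? hj) (huniq j hjne)
          · intro j hj
            by_cases hjne : j = j0
            · subst hjne; exact absurd hj hl
            · exact absurd (List.mem_of_mem_getLast? hj) (huniq j hjne)
        · obtain ⟨T1, T2, rfl⟩ := List.append_of_mem hT
          have hW : W = (S ++ B j0 ++ T1) ++ v :: T2 := by
            rw [← hSTl]; simp
          refine ⟨S ++ B j0 ++ T1, T2, hW, ?_, ?_, ?_⟩
          · intro j
            by_cases hj : j = j0
            · subst hj; left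
              exact (show B j <:+: S ++ B j ++ (T1 ++ [v]) from ⟨S, T1 ++ [v], by simp⟩).trans
                (show S ++ B j ++ (T1 ++ [v]) <:+: (S ++ B j ++ T1) ++ [v] from by simp)
            · exact side_all hW (hinf j) (huniq j hj)
          · intro j hj
            by_cases hjne : j = j0
            · subst hjne; exact absurd hj hh
            · exact absurd (List.mem_of_mem_head? hj) (huniq j hjne)
          · intro j hj
            by_cases hjne : j = j0
            · subst hjne; exact absurd hj hl
            · exact absurd (List.mem_of_mem_getLast? hj) (huniq j hjne)
  · push_neg at hex
    obtain ⟨X, Y, hXY⟩ := List.append_of_mem hv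
    refine ⟨X, Y, hXY, ?_, ?_, ?_⟩
    · intro j
      exact side_all hXY (hinf j) (hex j)
    · intro j hj
      exact absurd (List.mem_of_mem_head? hj) (hex j)
    · intro j hj
      exact absurd (List.mem_of_mem_getLast? hj) (hex j)

lemma singleton_infix_of_mem {a : V} {l : List V} (h : a ∈ l) : [a] <:+: l := by
  obtain ⟨X, Y, rfl⟩ := List.append_of_mem h
  exact ⟨X, Y, by simp⟩

lemma short_eq_singleton {x : V} {l : List V} (hx : x ∈ l) (hl : l.length < 2) : l = [x] := by
  cases l with
  | nil => simp at hx
  | cons a t =>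
    cases t with
    | nil => simp at hx; rw [hx]
    | cons b t2 => simp at hl

lemma vertex_on_edge : ∀ {l : List V} {x : V}, x ∈ l → 2 ≤ l.length →
    ∃ e ∈ chain l, x ∈ e := by
  intro l
  match l with
  | [] => intro x hx; simp at hx
  | [a] => intro x hx hl; simp at hl
  | a :: b :: t =>
    intro x hx _
    rw [List.mem_cons] at hx
    rcases hx with rfl | hx
    · exact ⟨s(x, b), by simp, by simp⟩
    · by_cases ht : 2 ≤ (b :: t).length
      · obtain ⟨e, he, hxe⟩ := vertex_on_edge hx ht
        exact ⟨e, by simp [he], hxe⟩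
      · have : b :: t = [x] := short_eq_singleton hx (by omega)
        rw [this]
        exact ⟨s(a, x), by simp, by simp⟩

lemma concat_of_getLast? {l : List V} {a : V} (h : l.getLast? = some a) :
    l = l.dropLast ++ [a] := by
  have hne : l ≠ [] := by intro hl; rw [hl] at h; simp at h
  have h2 : l.getLast hne = a := by
    have := List.getLast?_eq_getLast hne
    rw [h] at this; exact (Option.some.inj this).symm
  conv_lhs => rw [← List.dropLast_append_getLast hne]
  rw [h2]

lemma cons_of_head? {l : List V} {a : V} (h : l.head? = some a) : l = a :: l.tail := by
  cases l with
  | nil => simp at h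
  | cons x t => simp at h; rw [h]; rfl

lemma chain_tail_subset : ∀ {l : List V} {e : Sym2 V}, e ∈ chain l.tail → e ∈ chain l := by
  intro l e h
  match l with
  | [] => simpa using h
  | [a] => simp at h
  | a :: b :: t => rw [chain_cons_cons]; right; exact h

lemma chain_dropLast_subset {l : List V} {e : Sym2 V} (h : e ∈ chain l.dropLast) :
    e ∈ chain l := by
  rcases l.eq_nil_or_concat with rfl | ⟨l', a, hleq⟩
  · simpa using h
  · rw [List.concat_eq_append] at hleq
    subst hleq
    rw [List.dropLast_concat] at h
    rcases List.eq_nil_or_concat l' with rfl | hl'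
    · simp at h
    · have hne : l' ≠ [] := by rcases hl' with ⟨x, y, rfl⟩; simp
      rw [chain_concat l' hne a]
      exact List.mem_append_left _ h

lemma mem_chain_reverse {l : List V} {e : Sym2 V} : e ∈ chain l.reverse ↔ e ∈ chain l :=
  (chain_reverse_perm l).mem_iff

lemma interior_two_edges {l : List V} (hnd : l.Nodup) {A C : List V} {x : V}
    (hl : l = A ++ x :: C) (hA : A ≠ []) (hC : C ≠ []) :
    ∃ a c, a ≠ c ∧ a ≠ x ∧ c ≠ x ∧ s(a, x) ∈ chain l ∧ s(x, c) ∈ chain l := by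
  obtain ⟨A', a, hAeq⟩ := A.eq_nil_or_concat.resolve_left hA
  rw [List.concat_eq_append] at hAeq
  subst hAeq
  obtain ⟨c, C', rfl⟩ : ∃ c C', C = c :: C' := by
    cases C with
    | nil => exact absurd rfl hC
    | cons c C' => exact ⟨c, C', rfl⟩
  subst hl
  have hnd' := hnd
  rw [List.nodup_append] at hnd'
  have hax : a ≠ x := by
    intro h
    exact hnd'.2.2 a (show a ∈ A' ++ [a] by simp) a (show a ∈ x :: c :: C' by simp [h]) rfl
  have hcx : c ≠ x := by
    have h2 := hnd'.2.1
    rw [List.nodup_cons] at h2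
    intro h
    exact h2.1 (show x ∈ c :: C' by simp [h.symm])
  have hac : a ≠ c := by
    intro h
    exact hnd'.2.2 a (show a ∈ A' ++ [a] by simp) a (show a ∈ x :: c :: C' by simp [h]) rfl
  refine ⟨a, c, hac, hax, hcx, ?_, ?_⟩
  · have heq : A' ++ [a] ++ x :: c :: C' = A' ++ a :: x :: (c :: C') := by simp
    rw [heq]
    exact split_mem_chain a x _ A'
  · exact split_mem_chain x c C' (A' ++ [a])

section InsertMid
variable (X M Y : List V) (v : V)

lemma head?_insert_mid : (X ++ v :: (M ++ v :: Y)).head? = (X ++ v :: Y).head? := by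
  cases X <;> simp

lemma getLast?_insert_mid : (X ++ v :: (M ++ v :: Y)).getLast? = (X ++ v :: Y).getLast? := by
  rcases Y.eq_nil_or_concat with rfl | ⟨Y', y, hYeq⟩
  · have h1 : X ++ v :: (M ++ [v]) = (X ++ v :: M) ++ [v] := by simp
    have h2 : X ++ [v] = X ++ [v] := rfl
    rw [h1, List.getLast?_concat, List.getLast?_concat]
  · rw [List.concat_eq_append] at hYeq
    subst hYeq
    have h1 : X ++ v :: (M ++ v :: (Y' ++ [y])) = (X ++ v :: (M ++ v :: Y')) ++ [y] := by simp
    have h2 : X ++ v :: (Y' ++ [y]) = (X ++ v :: Y') ++ [y] := by simp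
    rw [h1, h2, List.getLast?_concat, List.getLast?_concat]

lemma closed_insert_mid (h : IsClosedWalk (X ++ v :: Y)) :
    IsClosedWalk (X ++ v :: (M ++ v :: Y)) := by
  refine ⟨by simp, ?_⟩
  rw [head?_insert_mid, getLast?_insert_mid]
  exact h.2

lemma count_insert_mid (y : V) :
    (X ++ v :: Y).count y ≤ (X ++ v :: (M ++ v :: Y)).count y := by
  simp only [List.count_append, List.count_cons]
  omega

lemma mem_insert_mid {z : V} (h : z ∈ X ++ v :: Y) : z ∈ X ++ v :: (M ++ v :: Y) := by
  simp only [List.mem_append, List.mem_cons] at h ⊢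
  tauto

end InsertMid

lemma edges_insert_u (X Y : List V) (v u : V) :
    ((chain (X ++ v :: ([u] ++ v :: Y)) : List (Sym2 V)) : Multiset (Sym2 V)) =
      ((chain (X ++ v :: Y) : List (Sym2 V)) : Multiset (Sym2 V)) +
        (s(u, v) ::ₘ s(u, v) ::ₘ 0) := by
  rw [chain_append_cons v ([u] ++ v :: Y) X, chain_append_cons v Y X]
  have h1 : chain (v :: ([u] ++ v :: Y)) = s(v, u) :: s(u, v) :: chain (v :: Y) := by
    simp only [List.singleton_append]; rfl
  rw [h1]
  have h2 : s(v, u) = s(u, v) := Sym2.eq_swap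
  rw [h2]
  rw [← Multiset.coe_add, ← Multiset.coe_add]
  have h3 : ((s(u, v) :: s(u, v) :: chain (v :: Y) : List (Sym2 V)) : Multiset (Sym2 V)) =
      s(u, v) ::ₘ s(u, v) ::ₘ (chain (v :: Y) : Multiset (Sym2 V)) := by
    simp
  rw [h3]
  simp only [← Multiset.singleton_add]
  abel

lemma edges_insert_loop (X Y : List V) (v : V) :
    ((chain (X ++ v :: ([v] ++ v :: Y)) : List (Sym2 V)) : Multiset (Sym2 V)) =
      ((chain (X ++ v :: Y) : List (Sym2 V)) : Multiset (Sym2 V)) +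
        (s(v, v) ::ₘ s(v, v) ::ₘ 0) := by
  rw [chain_append_cons v ([v] ++ v :: Y) X, chain_append_cons v Y X]
  have h1 : chain (v :: ([v] ++ v :: Y)) = s(v, v) :: s(v, v) :: chain (v :: Y) := by
    simp only [List.singleton_append]; rfl
  rw [h1]
  rw [← Multiset.coe_add, ← Multiset.coe_add]
  have h3 : ((s(v, v) :: s(v, v) :: chain (v :: Y) : List (Sym2 V)) : Multiset (Sym2 V)) =
      s(v, v) ::ₘ s(v, v) ::ₘ (chain (v :: Y) : Multiset (Sym2 V)) := by
    simp
  rw [h3]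
  simp only [← Multiset.singleton_add]
  abel

lemma diag_rep {e : Sym2 V} (h : e.IsDiag) : ∃ x, e = s(x, x) := by
  induction e using Sym2.ind with
  | _ a b =>
    rw [Sym2.mk_isDiag_iff] at h
    exact ⟨a, by rw [h]⟩

lemma start_edge {G : SimpleGraph V} {a b x : V} (p : G.Walk a b) (hp : p.IsPath)
    (hx : s(a, x) ∈ p.edges) : ∃ (h : G.Adj a x) (q : G.Walk x b), p = SimpleGraph.Walk.cons h q := by
  cases p with
  | nil => simp at hx
  | @cons _ w _ h q =>
    rw [SimpleGraph.Walk.edges_cons, List.mem_cons] at hx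
    rcases hx with hx | hx
    · have hxw : x = w := Sym2.congr_right.mp hx
      subst hxw
      exact ⟨h, q, rfl⟩
    · exfalso
      have : a ∈ q.support := SimpleGraph.Walk.fst_mem_support_of_mem_edges q hx
      rw [SimpleGraph.Walk.cons_isPath_iff] at hp
      exact hp.2 this

lemma exists_leaf [Fintype V] {E : Finset (Sym2 V)} (hnd : ∀ e ∈ E, ¬ e.IsDiag)
    (hac : (SimpleGraph.fromEdgeSet (E : Set (Sym2 V))).IsAcyclic) (hne : E.Nonempty) :
    ∃ u v : V, u ≠ v ∧ s(u, v) ∈ E ∧ ∀ e ∈ E, u ∈ e → e = s(u, v) := by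
  classical
  set G := SimpleGraph.fromEdgeSet (E : Set (Sym2 V)) with hG
  have hadj : ∀ x y : V, G.Adj x y ↔ s(x, y) ∈ E ∧ x ≠ y := by
    intro x y
    rw [hG, SimpleGraph.fromEdgeSet_adj]
    simp
  obtain ⟨e₀, he₀⟩ := hne
  obtain ⟨x, y, hxy⟩ : ∃ x y, e₀ = s(x, y) := by
    induction e₀ using Sym2.ind with
    | _ x y => exact ⟨x, y, rfl⟩
  have hxyne : x ≠ y := by
    intro h; apply hnd e₀ he₀; rw [hxy, h]; exact Sym2.mk_isDiag_iff.mpr rfl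
  have hadj0 : G.Adj x y := (hadj x y).mpr ⟨by rw [← hxy]; exact he₀, hxyne⟩
  haveI : Nonempty V := ⟨x⟩
  set P : ℕ → Prop := fun n => ∃ (a c : V) (p : G.Walk a c), p.IsPath ∧ p.length = n with hP
  have hP1 : P 1 := by
    refine ⟨x, y, SimpleGraph.Walk.cons hadj0 SimpleGraph.Walk.nil, ?_, rfl⟩
    rw [SimpleGraph.Walk.cons_isPath_iff]
    exact ⟨SimpleGraph.Walk.IsPath.nil, by simp [hxyne]⟩
  have hbound : ∀ n, P n → n < Fintype.card V := by
    rintro n ⟨a, c, p, hp, rfl⟩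
    exact hp.length_lt
  set N := Nat.findGreatest P (Fintype.card V) with hN
  have hPN : P N := Nat.findGreatest_spec (le_of_lt (hbound 1 hP1)) hP1
  obtain ⟨a, c, p, hp, hlen⟩ := hPN
  have hN1 : 1 ≤ N := Nat.le_findGreatest (le_of_lt (hbound 1 hP1)) hP1
  obtain ⟨b', q, h, hpeq⟩ : ∃ (b' : V) (q : G.Walk b' c) (h : G.Adj a b'),
      p = SimpleGraph.Walk.cons h q := by
    cases p with
    | nil => rw [← hlen] at hN1; simp at hN1
    | cons h q => exact ⟨_, q, h, rfl⟩
  refine ⟨a, b', fun hab => (hadj a b').mp h |>.2 hab, ((hadj a b').mp h).1, ?_⟩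
  intro e he hae
  obtain ⟨c', hec⟩ : ∃ c', e = s(a, c') := Sym2.mem_iff_exists.mp hae
  by_contra hne'
  have hcb' : c' ≠ b' := by
    intro hcb; apply hne'; rw [hec, hcb]
  have hac' : a ≠ c' := by
    intro hac''; apply hnd e he; rw [hec, ← hac'']; exact Sym2.mk_isDiag_iff.mpr rfl
  have hadjc : G.Adj a c' := (hadj a c').mpr ⟨by rw [← hec]; exact he, hac'⟩
  by_cases hsup : c' ∈ p.support
  · set q' := p.takeUntil c' hsup with hq'
    have hq'path : q'.IsPath := hp.takeUntil hsup
    by_cases hedge : s(c', a) ∈ q'.edges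
    · have hedge' : s(a, c') ∈ q'.edges := by rwa [Sym2.eq_swap]
      obtain ⟨h2, qq, hq'eq⟩ := start_edge q' hq'path hedge'
      have hedge2 : s(a, c') ∈ p.edges :=
        SimpleGraph.Walk.edges_takeUntil_subset p hsup hedge'
      obtain ⟨h3, q2, hpeq2⟩ := start_edge p hp hedge2
      apply hcb'
      have hsup1 : p.support = a :: q2.support := by
        rw [hpeq2]; exact SimpleGraph.Walk.support_cons _ _
      have hsup2 : p.support = a :: q.support := by
        rw [hpeq]; exact SimpleGraph.Walk.support_cons _ _
      have hqq : q2.support = q.support := by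
        have h := hsup1.symm.trans hsup2
        injection h
      have e1 : q2.support.head? = some c' := by
        rw [SimpleGraph.Walk.support_eq_cons q2]; rfl
      have e2 : q.support.head? = some b' := by
        rw [SimpleGraph.Walk.support_eq_cons q]; rfl
      rw [hqq] at e1
      exact Option.some.inj (e1.symm.trans e2)
    · exact hac _ ((SimpleGraph.Walk.cons_isCycle_iff q' hadjc.symm).mpr ⟨hq'path, hedge⟩)
  · have hplus : P (N + 1) := by
      refine ⟨c', c, SimpleGraph.Walk.cons hadjc.symm p, ?_, by simp [hlen]⟩
      rw [SimpleGraph.Walk.cons_isPath_iff]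
      exact ⟨hp, hsup⟩
    have := Nat.le_findGreatest (le_of_lt (hbound _ hplus)) hplus
    omega


lemma mem_edgeVerts [Fintype V] {F : Finset (Sym2 V)} {x : V} : x ∈ edgeVerts F ↔ ∃ e ∈ F, x ∈ e := by
  simp [edgeVerts]

lemma avoid_leaf_edge [Fintype V] {E : Finset (Sym2 V)} {u v : V}
    (hleaf : ∀ e ∈ E, u ∈ e → e = s(u, v)) (huv : u ≠ v) :
    ∀ {a b : V} (p : (SimpleGraph.fromEdgeSet (E : Set (Sym2 V))).Walk a b),
      p.IsPath → a ≠ u → b ≠ u → s(u, v) ∉ p.edges := by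
  intro a b p
  induction p with
  | nil => intro _ _ _ h; simp at h
  | @cons a w b h q ih =>
    intro hp hau hbu hmem
    rw [SimpleGraph.Walk.edges_cons, List.mem_cons] at hmem
    have hwu : w ≠ u := by
      intro hwu
      subst hwu
      cases q with
      | nil => exact hbu rfl
      | @cons _ c' _ h' q' =>
        have h'mem : s(w, c') ∈ E := by
          have := h'.1; simpa using this
        have hc' : c' = v := Sym2.congr_right.mp (hleaf _ h'mem (by simp))
        have hamem : s(a, w) ∈ E := by
          have := h.1; simpa using this
        have hav : a = v := by
          have h2 := hleaf _ hamem (by simp)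
          rw [Sym2.eq_iff] at h2
          rcases h2 with ⟨h3, _⟩ | ⟨h3, _⟩
          · exact absurd h3 hau
          · exact h3
        rw [SimpleGraph.Walk.cons_isPath_iff] at hp
        apply hp.2
        rw [SimpleGraph.Walk.support_cons]
        right
        rw [hav, ← hc']
        exact q'.start_mem_support
    rcases hmem with hmem | hmem
    · have : u ∈ s(a, w) := by rw [← hmem]; simp
      rcases Sym2.mem_iff.mp this with rfl | rfl
      · exact hau rfl
      · exact hwu rfl
    · exact ih hp.of_cons hwu hbu hmem


section Erase
variable [Fintype V] {E : Finset (Sym2 V)} {u v : V}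

lemma not_mem_edgeVerts_erase (hleaf : ∀ e ∈ E, u ∈ e → e = s(u, v)) :
    u ∉ edgeVerts (E.erase s(u, v)) := by
  rw [mem_edgeVerts]
  rintro ⟨e, he, hue⟩
  have h1 := hleaf e (Finset.erase_subset _ _ he) hue
  rw [h1] at he
  exact Finset.notMem_erase _ _ he

lemma acyclic_erase (hac : (SimpleGraph.fromEdgeSet (E : Set (Sym2 V))).IsAcyclic) :
    (SimpleGraph.fromEdgeSet ((E.erase s(u, v) : Finset (Sym2 V)) : Set (Sym2 V))).IsAcyclic := by
  intro x c hc
  have hle : SimpleGraph.fromEdgeSet ((E.erase s(u, v) : Finset (Sym2 V)) : Set (Sym2 V)) ≤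
      SimpleGraph.fromEdgeSet (E : Set (Sym2 V)) :=
    SimpleGraph.fromEdgeSet_mono (by exact_mod_cast Finset.coe_subset.mpr (Finset.erase_subset _ _))
  exact hac _ (hc.mapLe hle)

lemma reach_in_erase (hleaf : ∀ e ∈ E, u ∈ e → e = s(u, v)) (huv : u ≠ v) {a b : V}
    (h : (SimpleGraph.fromEdgeSet (E : Set (Sym2 V))).Reachable a b)
    (hau : a ≠ u) (hbu : b ≠ u) :
    (SimpleGraph.fromEdgeSet ((E.erase s(u, v) : Finset (Sym2 V)) : Set (Sym2 V))).Reachable a b := by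
  obtain ⟨w⟩ := h
  have hpath : (w.toPath : (SimpleGraph.fromEdgeSet (E : Set (Sym2 V))).Walk a b).IsPath :=
    w.toPath.2
  set p0 : (SimpleGraph.fromEdgeSet (E : Set (Sym2 V))).Walk a b := ↑w.toPath with hp0
  have hnot := avoid_leaf_edge hleaf huv p0 hpath hau hbu
  have hTrans : ∀ e ∈ p0.edges,
      e ∈ (SimpleGraph.fromEdgeSet ((E.erase s(u, v) : Finset (Sym2 V)) : Set (Sym2 V))).edgeSet := by
    intro e he
    have h1 : e ∈ (SimpleGraph.fromEdgeSet (E : Set (Sym2 V))).edgeSet :=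
      p0.edges_subset_edgeSet he
    rw [SimpleGraph.edgeSet_fromEdgeSet] at h1 ⊢
    refine ⟨?_, h1.2⟩
    have hne : e ≠ s(u, v) := fun hh => hnot (hh ▸ he)
    have h2 : e ∈ E := by exact_mod_cast h1.1
    exact_mod_cast Finset.mem_erase.mpr ⟨hne, h2⟩
  exact ⟨p0.transfer _ hTrans⟩

lemma v_mem_erase (hleaf : ∀ e ∈ E, u ∈ e → e = s(u, v)) (huv : u ≠ v) (huvE : s(u, v) ∈ E)
    (hconn : ∀ a b, a ∈ edgeVerts E → b ∈ edgeVerts E →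
      (SimpleGraph.fromEdgeSet (E : Set (Sym2 V))).Reachable a b)
    (hne : E.erase s(u, v) ≠ ∅) : v ∈ edgeVerts (E.erase s(u, v)) := by
  obtain ⟨e', he'⟩ := Finset.nonempty_iff_ne_empty.mpr hne
  have he'E : e' ∈ E := Finset.erase_subset _ _ he'
  have hue' : u ∉ e' := by
    intro hu
    have := hleaf e' he'E hu
    rw [this] at he'
    exact Finset.notMem_erase _ _ he'
  by_cases hv : v ∈ e'
  · exact mem_edgeVerts.mpr ⟨e', he', hv⟩
  · obtain ⟨x, y, hxy⟩ : ∃ x y, e' = s(x, y) := by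
      induction e' using Sym2.ind with
      | _ x y => exact ⟨x, y, rfl⟩
    have hxu : x ≠ u := by
      intro h; apply hue'; rw [hxy, h]; simp
    have hvx : v ≠ x := by
      intro h; apply hv; rw [hxy, ← h]; simp
    have hreach := hconn v x (mem_edgeVerts.mpr ⟨s(u, v), huvE, by simp⟩)
      (mem_edgeVerts.mpr ⟨e', he'E, by rw [hxy]; simp⟩)
    have hreach' := reach_in_erase hleaf huv hreach (Ne.symm huv) hxu
    obtain ⟨w⟩ := hreach'
    cases w with
    | nil => exact absurd rfl hvx
    | @cons _ c _ h q =>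
      have h1 := h.1
      exact mem_edgeVerts.mpr ⟨s(v, c), by exact_mod_cast h1, by simp⟩

end Erase

lemma chain_mem_pathEdges [Fintype V] {l : List V} {e : Sym2 V} (h : e ∈ chain l) :
    e ∈ pathEdges l := by
  rw [pathEdges_eq]; exact List.mem_toFinset.mpr h

lemma main [Fintype V] : ∀ (n : ℕ) (E : Finset (Sym2 V)), E.card = n →
    (∀ e ∈ E, ¬ e.IsDiag) →
    (SimpleGraph.fromEdgeSet (E : Set (Sym2 V))).IsAcyclic →
    (∀ a b, a ∈ edgeVerts E → b ∈ edgeVerts E →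
      (SimpleGraph.fromEdgeSet (E : Set (Sym2 V))).Reachable a b) →
    ∀ (s : V), (E ≠ ∅ → s ∈ edgeVerts E) →
    ∀ (r : ℕ) (P : Fin r → List V), (∀ j, (P j).Nodup) →
    (∀ j, pathEdges (P j) ⊆ E) →
    (∀ i j, i ≠ j → Disjoint (P i).toFinset (P j).toFinset) →
    (∀ j x, x ∈ P j → x ∈ edgeVerts E ∨ x = s) →
    ∃ W : List V, s ∈ W ∧ IsClosedWalk W ∧ walkEdges W = E.val + E.val ∧
      ∀ j, (P j) <:+: W ∨ (P j).reverse <:+: W := by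
  intro n
  induction n using Nat.strong_induction_on with
  | _ n IH =>
  intro E hcard hnd hac hconn s hsE r P hPnd hPsub hPdisj hH1
  by_cases hE : E = ∅
  · subst hE
    refine ⟨[s], by simp, ⟨by simp, by simp⟩, by simp [walkEdges], ?_⟩
    intro j
    left
    rcases hPl : P j with _ | ⟨x, t⟩
    · exact List.nil_infix
    · rcases t with _ | ⟨y, t2⟩
      · rcases hH1 j x (by rw [hPl]; simp) with hx | hxs
        · rw [mem_edgeVerts] at hx
          obtain ⟨e, he, _⟩ := hx
          simp at he
        · subst hxs
          exact List.infix_refl _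
      · exfalso
        have h1 : s(x, y) ∈ pathEdges (P j) := by
          rw [hPl]
          exact chain_mem_pathEdges (split_mem_chain x y t2 [])
        have := hPsub j h1
        simp at this
  · have hEne : E.Nonempty := Finset.nonempty_iff_ne_empty.mpr hE
    obtain ⟨u, v, huv, huvE, hleaf⟩ := exists_leaf hnd hac hEne
    set E' := E.erase s(u, v) with hE'
    have hnpos : 0 < n := by
      have := Finset.card_pos.mpr hEne; omega
    have hcard' : E'.card < n := by
      rw [hE', Finset.card_erase_of_mem huvE, hcard]; omega
    classical
    set P' : Fin r → List V := fun j =>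
      if u ∈ P j then (if (P j).head? = some u then (P j).tail else (P j).dropLast) else P j
      with hP'
    have hP'def : ∀ j, P' j =
        if u ∈ P j then (if (P j).head? = some u then (P j).tail else (P j).dropLast) else P j :=
      fun j => by rw [hP']
    have hchainE : ∀ j {e : Sym2 V}, e ∈ chain (P j) → e ∈ E :=
      fun j {_} he => hPsub j (chain_mem_pathEdges he)
    have hend : ∀ j, u ∈ P j → (P j).head? = some u ∨ (P j).getLast? = some u := by
      intro j hu
      obtain ⟨A, C, hAC⟩ := List.append_of_mem hu
      rcases A.eq_nil_or_concat with rfl | ⟨A1, a1, hA1⟩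
      · left; rw [hAC]; rfl
      · rcases C.eq_nil_or_concat with rfl | ⟨C1, c1, hC1⟩
        · right; rw [hAC]
          have : A ++ [u] = A ++ [u] := rfl
          rw [List.getLast?_concat]
        · have hA : A ≠ [] := by rw [hA1]; simp
          have hC : C ≠ [] := by rw [hC1]; simp
          exfalso
          obtain ⟨a, c, hac2, hau2, hcu2, he1, he2⟩ :=
            interior_two_edges (hPnd j) hAC hA hC
          have h1 := hleaf _ (hchainE j he1) (by simp)
          have h2 := hleaf _ (hchainE j he2) (by simp)
          rw [Sym2.eq_iff] at h1
          have hav : a = v := by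
            rcases h1 with ⟨h3, _⟩ | ⟨h3, _⟩
            · exact absurd h3 hau2
            · exact h3
          have hcv : c = v := Sym2.congr_right.mp h2
          exact hac2 (hav.trans hcv.symm)
    have hU : ∀ j, u ∉ P' j := by
      intro j
      rw [hP'def j]
      by_cases hu : u ∈ P j
      · rw [if_pos hu]
        by_cases hh : (P j).head? = some u
        · rw [if_pos hh]
          have h1 := cons_of_head? hh
          have h2 := hPnd j
          rw [h1, List.nodup_cons] at h2
          exact h2.1
        · rw [if_neg hh]
          have hlast := (hend j hu).resolve_left hh
          have h1 := concat_of_getLast? hlast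
          have h2 := hPnd j
          rw [h1, List.nodup_append] at h2
          intro hmem
          exact h2.2.2 u hmem u (by simp) rfl
      · rw [if_neg hu]; exact hu
    have hsubl : ∀ j x, x ∈ P' j → x ∈ P j := by
      intro j x hx
      rw [hP'def j] at hx
      by_cases hu : u ∈ P j
      · rw [if_pos hu] at hx
        by_cases hh : (P j).head? = some u
        · rw [if_pos hh] at hx
          exact (List.tail_sublist _).subset hx
        · rw [if_neg hh] at hx
          exact (List.dropLast_sublist _).subset hx
      · rwa [if_neg hu] at hx
    have hchainsub : ∀ j {e : Sym2 V}, e ∈ chain (P' j) → e ∈ chain (P j) := by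
      intro j e he
      rw [hP'def j] at he
      by_cases hu : u ∈ P j
      · rw [if_pos hu] at he
        by_cases hh : (P j).head? = some u
        · rw [if_pos hh] at he
          exact chain_tail_subset he
        · rw [if_neg hh] at he
          exact chain_dropLast_subset he
      · rwa [if_neg hu] at he
    have hP'nd : ∀ j, (P' j).Nodup := by
      intro j
      rw [hP'def j]
      by_cases hu : u ∈ P j
      · rw [if_pos hu]
        by_cases hh : (P j).head? = some u
        · rw [if_pos hh]; exact (List.tail_sublist _).nodup (hPnd j)
        · rw [if_neg hh]; exact (List.dropLast_sublist _).nodup (hPnd j)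
      · rw [if_neg hu]; exact hPnd j
    have hP'sub : ∀ j, pathEdges (P' j) ⊆ E' := by
      intro j e he
      rw [pathEdges_eq, List.mem_toFinset] at he
      have heE : e ∈ E := hchainE j (hchainsub j he)
      have hne : e ≠ s(u, v) := by
        intro heq
        have : u ∈ e := by rw [heq]; simp
        exact hU j (mem_of_mem_chain he this)
      exact Finset.mem_erase.mpr ⟨hne, heE⟩
    have hP'disj : ∀ i j, i ≠ j → Disjoint (P' i).toFinset (P' j).toFinset := by
      intro i j hij
      refine (hPdisj i j hij).mono ?_ ?_ <;>
        · intro x hx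
          rw [List.mem_toFinset] at hx ⊢
          exact hsubl _ x hx
    have hH1' : ∀ j x, x ∈ P' j → x ∈ edgeVerts E' ∨ x = v := by
      intro j x hx
      by_cases hlen : 2 ≤ (P' j).length
      · obtain ⟨e, he, hxe⟩ := vertex_on_edge hx hlen
        exact Or.inl (mem_edgeVerts.mpr ⟨e, hP'sub j (chain_mem_pathEdges he), hxe⟩)
      · have hPx : P' j = [x] := short_eq_singleton hx (by omega)
        by_cases hu : u ∈ P j
        · by_cases hh : (P j).head? = some u
          · have htl : P' j = (P j).tail := by rw [hP'def j, if_pos hu, if_pos hh]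
            have h1 := cons_of_head? hh
            rw [← htl, hPx] at h1
            have hedge : s(u, x) ∈ chain (P j) := by rw [h1]; simp
            have := hleaf _ (hchainE j hedge) (by simp)
            exact Or.inr (Sym2.congr_right.mp this)
          · have hlast := (hend j hu).resolve_left hh
            have hdl : P' j = (P j).dropLast := by rw [hP'def j, if_pos hu, if_neg hh]
            have h1 := concat_of_getLast? hlast
            rw [← hdl, hPx] at h1
            have hedge : s(x, u) ∈ chain (P j) := by rw [h1]; simp
            have h2 := hleaf _ (hchainE j hedge) (by simp)
            rw [Sym2.eq_iff] at h2
            rcases h2 with ⟨h3, _⟩ | ⟨h3, _⟩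
            · exfalso
              apply hU j
              rw [hPx, ← h3]
              simp
            · exact Or.inr h3
        · have hPP : P' j = P j := by rw [hP'def j, if_neg hu]
          have hxPj : x ∈ P j := by rw [← hPP]; exact hx
          have hxu : x ≠ u := by
            intro h; rw [h] at hx; exact hU j hx
          rcases hH1 j x hxPj with hxE | hxs
          · rw [mem_edgeVerts] at hxE
            obtain ⟨e, he, hxe⟩ := hxE
            by_cases heuv : e = s(u, v)
            · right
              rw [heuv] at hxe
              rcases Sym2.mem_iff.mp hxe with h | h
              · exact absurd h hxu
              · exact h
            · exact Or.inl (mem_edgeVerts.mpr ⟨e, Finset.mem_erase.mpr ⟨heuv, he⟩, hxe⟩)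
          · subst hxs
            have hsE2 := hsE hE
            rw [mem_edgeVerts] at hsE2
            obtain ⟨e, he, hse⟩ := hsE2
            by_cases heuv : e = s(u, v)
            · right
              rw [heuv] at hse
              rcases Sym2.mem_iff.mp hse with h | h
              · exact absurd h hxu
              · exact h
            · exact Or.inl (mem_edgeVerts.mpr ⟨e, Finset.mem_erase.mpr ⟨heuv, he⟩, hse⟩)
    have hconn' : ∀ a b, a ∈ edgeVerts E' → b ∈ edgeVerts E' →
        (SimpleGraph.fromEdgeSet (E' : Set (Sym2 V))).Reachable a b := by
      intro a b ha hb
      have hEVsub : ∀ x, x ∈ edgeVerts E' → x ∈ edgeVerts E := by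
        intro x hx
        rw [mem_edgeVerts] at hx ⊢
        obtain ⟨e, he, hxe⟩ := hx
        exact ⟨e, Finset.erase_subset _ _ he, hxe⟩
      have hau : a ≠ u := by
        intro h; rw [h] at ha; exact not_mem_edgeVerts_erase hleaf ha
      have hbu : b ≠ u := by
        intro h; rw [h] at hb; exact not_mem_edgeVerts_erase hleaf hb
      exact reach_in_erase hleaf huv (hconn a b (hEVsub a ha) (hEVsub b hb)) hau hbu
    obtain ⟨W', hvW', hW'cl, hW'edges, hW'inf⟩ :=
      IH E'.card hcard' E' rfl
        (fun e he => hnd e (Finset.erase_subset _ _ he))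
        (acyclic_erase hac) hconn' v
        (fun hne' => v_mem_erase hleaf huv huvE hconn hne')
        r P' hP'nd hP'sub hP'disj hH1'
    set B : Fin r → List V := fun j => if P' j <:+: W' then P' j else (P' j).reverse with hBs
    have hBdef : ∀ j, B j = if P' j <:+: W' then P' j else (P' j).reverse := fun j => by rw [hBs]
    have hBinf : ∀ j, B j <:+: W' := by
      intro j
      rw [hBdef j]
      by_cases hb : P' j <:+: W'
      · rwa [if_pos hb]
      · rw [if_neg hb]; exact (hW'inf j).resolve_left hb
    have hBchain : ∀ j {e : Sym2 V}, e ∈ chain (B j) → e ∈ chain (P' j) := by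
      intro j e he
      rw [hBdef j] at he
      by_cases hb : P' j <:+: W'
      · rwa [if_pos hb] at he
      · rw [if_neg hb] at he
        exact mem_chain_reverse.mp he
    have hBnd : ∀ j, (B j).Nodup := by
      intro j
      rw [hBdef j]
      by_cases hb : P' j <:+: W'
      · rw [if_pos hb]; exact hP'nd j
      · rw [if_neg hb]; exact (List.nodup_reverse).mpr (hP'nd j)
    have hBdisj : ∀ i j, i ≠ j → Disjoint (B i).toFinset (B j).toFinset := by
      intro i j hij
      refine (hP'disj i j hij).mono ?_ ?_ <;>
        · intro x hx
          rw [List.mem_toFinset] at hx ⊢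
          rw [hBdef _] at hx
          split at hx
          · exact hx
          · exact List.mem_reverse.mp hx
    have hcnt : ∀ j, v ∈ B j → (B j).head? ≠ some v → (B j).getLast? ≠ some v →
        2 ≤ W'.count v := by
      intro j hvB hh hl
      obtain ⟨A, C, hACeq⟩ := List.append_of_mem hvB
      have hA : A ≠ [] := by
        intro h; rw [h] at hACeq; rw [hACeq] at hh; exact hh rfl
      have hC : C ≠ [] := by
        intro h; rw [h] at hACeq; rw [hACeq] at hl
        apply hl
        have : A ++ [v] = A ++ [v] := rfl
        rw [List.getLast?_concat]
      obtain ⟨a, c, hac2, hav2, hcv2, he1, he2⟩ :=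
        interior_two_edges (hBnd j) hACeq hA hC
      have he1' : s(a, v) ∈ E' := hP'sub j (chain_mem_pathEdges (hBchain j he1))
      have he2' : s(c, v) ∈ E' := by
        have := hP'sub j (chain_mem_pathEdges (hBchain j he2))
        rwa [Sym2.eq_swap] at this
      have hEq : (chain W' : Multiset (Sym2 V)) = E'.val + E'.val := by
        rw [← walkEdges_eq]; exact hW'edges
      have hc1 : 2 ≤ Multiset.count s(a, v) (chain W' : Multiset (Sym2 V)) := by
        rw [hEq, Multiset.count_add]
        have h1 : 1 ≤ Multiset.count s(a, v) E'.val :=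
          Multiset.one_le_count_iff_mem.mpr he1'
        omega
      have hc2 : 2 ≤ Multiset.count s(c, v) (chain W' : Multiset (Sym2 V)) := by
        rw [hEq, Multiset.count_add]
        have h1 : 1 ≤ Multiset.count s(c, v) E'.val :=
          Multiset.one_le_count_iff_mem.mpr he2'
        omega
      exact count_two hW'cl.1 hW'cl.2 hac2 hav2 hcv2 hc1 hc2
    obtain ⟨X, Y, hXY, hside, hpre, hsuf⟩ := ins W' B hBinf hBnd hBdisj v hvW' hcnt
    set W : List V := X ++ v :: ([u] ++ v :: Y) with hW
    have hWeq : W = X ++ v :: u :: v :: Y := by rw [hW]; rfl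
    have hEd : walkEdges W = E.val + E.val := by
      rw [hW, walkEdges_eq, edges_insert_u]
      have h1 : ((chain (X ++ v :: Y) : List (Sym2 V)) : Multiset (Sym2 V)) =
          E'.val + E'.val := by
        rw [← hXY, ← walkEdges_eq]; exact hW'edges
      rw [h1]
      have hval : E.val = s(u, v) ::ₘ E'.val := by
        rw [hE', Finset.erase_val]
        exact (Multiset.cons_erase huvE).symm
      rw [hval]
      simp only [← Multiset.singleton_add]
      abel
    have hsW : s ∈ W := by
      have hsE2 := hsE hE
      rw [mem_edgeVerts] at hsE2
      obtain ⟨e, he, hse⟩ := hsE2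
      have heW : e ∈ (chain W : Multiset (Sym2 V)) := by
        rw [← walkEdges_eq, hEd]
        exact Multiset.mem_add.mpr (Or.inl he)
      exact mem_of_mem_chain (Multiset.mem_coe.mp heW) hse
    have hcl : IsClosedWalk W := by
      rw [hW]
      exact closed_insert_mid X [u] Y v (hXY ▸ hW'cl)
    refine ⟨W, hsW, hcl, hEd, ?_⟩
    intro j
    by_cases hu : u ∈ P j
    · by_cases hhead : (P j).head? = some u
      · have htl : P' j = (P j).tail := by rw [hP'def j, if_pos hu, if_pos hhead]
        have hPj : P j = u :: P' j := by rw [htl]; exact cons_of_head? hhead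
        rcases hPt : P' j with _ | ⟨w, t2⟩
        · left
          rw [hPj, hPt]
          exact singleton_infix_of_mem (by rw [hWeq]; simp)
        · have hedge : s(u, w) ∈ chain (P j) := by rw [hPj, hPt]; simp
          have hwv : w = v := Sym2.congr_right.mp (hleaf _ (hchainE j hedge) (by simp))
          by_cases hbj : P' j <:+: W'
          · have hBj : B j = P' j := by rw [hBdef j, if_pos hbj]
            have hh2 : (B j).head? = some v := by rw [hBj, hPt, hwv]; rfl
            obtain ⟨Z, hZ⟩ := hpre j hh2
            left
            refine ⟨X ++ [v], Z, ?_⟩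
            rw [hPj, ← hBj, hWeq]
            rw [show (X ++ [v]) ++ (u :: B j) ++ Z = X ++ v :: u :: (B j ++ Z) by simp]
            rw [hZ]
          · have hBj : B j = (P' j).reverse := by rw [hBdef j, if_neg hbj]
            have hl2 : (B j).getLast? = some v := by
              rw [hBj, List.getLast?_reverse, hPt, hwv]; rfl
            obtain ⟨Z, hZ⟩ := hsuf j hl2
            right
            refine ⟨Z, v :: Y, ?_⟩
            rw [hPj, List.reverse_cons, ← hBj, hWeq]
            rw [show Z ++ (B j ++ [u]) ++ (v :: Y) = (Z ++ B j) ++ (u :: v :: Y) by simp]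
            rw [hZ]
            simp
      · have hlast : (P j).getLast? = some u := (hend j hu).resolve_left hhead
        have hdl : P' j = (P j).dropLast := by rw [hP'def j, if_pos hu, if_neg hhead]
        have hPj : P j = P' j ++ [u] := by rw [hdl]; exact concat_of_getLast? hlast
        have hP'ne : P' j ≠ [] := by
          intro h
          apply hhead
          rw [hPj, h]
          rfl
        have hgl : (P' j).getLast? = some v := by
          have hedge : s((P' j).getLast hP'ne, u) ∈ chain (P j) := by
            rw [hPj, chain_concat _ hP'ne u]
            simp
          have h2 := hleaf _ (hchainE j hedge) (by simp)
          rw [Sym2.eq_iff] at h2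
          have hglv : (P' j).getLast hP'ne = v := by
            rcases h2 with ⟨_, h3⟩ | ⟨h3, _⟩
            · exact absurd h3 huv
            · exact h3
          rw [List.getLast?_eq_getLast hP'ne, hglv]
        by_cases hbj : P' j <:+: W'
        · have hBj : B j = P' j := by rw [hBdef j, if_pos hbj]
          have hl2 : (B j).getLast? = some v := by rw [hBj]; exact hgl
          obtain ⟨Z, hZ⟩ := hsuf j hl2
          left
          refine ⟨Z, v :: Y, ?_⟩
          rw [hPj, ← hBj, hWeq]
          rw [show Z ++ (B j ++ [u]) ++ (v :: Y) = (Z ++ B j) ++ (u :: v :: Y) by simp]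
          rw [hZ]
          simp
        · have hBj : B j = (P' j).reverse := by rw [hBdef j, if_neg hbj]
          have hh2 : (B j).head? = some v := by rw [hBj, List.head?_reverse]; exact hgl
          obtain ⟨Z, hZ⟩ := hpre j hh2
          right
          refine ⟨X ++ [v], Z, ?_⟩
          rw [hPj, List.reverse_append, List.reverse_singleton, ← hBj, hWeq]
          rw [show (X ++ [v]) ++ ([u] ++ B j) ++ Z = X ++ v :: u :: (B j ++ Z) by simp]
          rw [hZ]
    · have hPP : P' j = P j := by rw [hP'def j, if_neg hu]
      have hWin : ∀ (L : List V), (L <:+: X ++ [v] ∨ L <:+: v :: Y) → L <:+: W := by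
        intro L hL
        rcases hL with h | h
        · refine h.trans (List.IsPrefix.isInfix ⟨u :: v :: Y, ?_⟩)
          rw [hWeq]; simp
        · refine h.trans (List.IsSuffix.isInfix ⟨X ++ [v, u], ?_⟩)
          rw [hWeq]; simp
      by_cases hbj : P' j <:+: W'
      · have hBj : B j = P' j := by rw [hBdef j, if_pos hbj]
        left
        rw [← hPP, ← hBj]
        exact hWin _ (hside j)
      · have hBj : B j = (P' j).reverse := by rw [hBdef j, if_neg hbj]
        right
        rw [← hPP, ← hBj]
        exact hWin _ (hside j)

lemma loops [Fintype V] : ∀ (n : ℕ) (L : Finset (Sym2 V)), L.card = n →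
    (∀ e ∈ L, e.IsDiag) →
    ∀ (W : List V), IsClosedWalk W → (∀ e ∈ L, ∀ x, x ∈ e → x ∈ W) →
    ∀ (r : ℕ) (P : Fin r → List V), (∀ j, (P j).Nodup) →
    (∀ i j, i ≠ j → Disjoint (P i).toFinset (P j).toFinset) →
    (∀ j, P j <:+: W ∨ (P j).reverse <:+: W) →
    (∀ j A x C, A ≠ [] → C ≠ [] → P j = A ++ x :: C → 2 ≤ W.count x) →
    ∃ W2, IsClosedWalk W2 ∧ walkEdges W2 = walkEdges W + L.val + L.val ∧
      ∀ j, P j <:+: W2 ∨ (P j).reverse <:+: W2 := by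
  intro n
  induction n using Nat.strong_induction_on with
  | _ n IH =>
  intro L hcard hdiag W hWcl hWmem r P hPnd hPdisj hPinf hPcnt
  by_cases hL : L = ∅
  · subst hL
    exact ⟨W, hWcl, by simp, hPinf⟩
  · obtain ⟨e, he⟩ := Finset.nonempty_iff_ne_empty.mpr hL
    obtain ⟨x, rfl⟩ := diag_rep (hdiag e he)
    classical
    set B : Fin r → List V := fun j => if P j <:+: W then P j else (P j).reverse with hBs
    have hBdef : ∀ j, B j = if P j <:+: W then P j else (P j).reverse := fun j => by rw [hBs]
    have hBinf : ∀ j, B j <:+: W := by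
      intro j
      rw [hBdef j]
      by_cases hb : P j <:+: W
      · rwa [if_pos hb]
      · rw [if_neg hb]; exact (hPinf j).resolve_left hb
    have hBnd : ∀ j, (B j).Nodup := by
      intro j
      rw [hBdef j]
      by_cases hb : P j <:+: W
      · rw [if_pos hb]; exact hPnd j
      · rw [if_neg hb]; exact (List.nodup_reverse).mpr (hPnd j)
    have hBdisj : ∀ i j, i ≠ j → Disjoint (B i).toFinset (B j).toFinset := by
      intro i j hij
      refine (hPdisj i j hij).mono ?_ ?_ <;>
        · intro z hz
          rw [List.mem_toFinset] at hz ⊢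
          rw [hBdef _] at hz
          split at hz
          · exact hz
          · exact List.mem_reverse.mp hz
    have hxW : x ∈ W := hWmem _ he x (by simp)
    have hcnt : ∀ j, x ∈ B j → (B j).head? ≠ some x → (B j).getLast? ≠ some x →
        2 ≤ W.count x := by
      intro j hxB hh hl
      obtain ⟨A, C, hACeq⟩ := List.append_of_mem hxB
      have hA : A ≠ [] := by
        intro h; rw [h] at hACeq; rw [hACeq] at hh; exact hh rfl
      have hC : C ≠ [] := by
        intro h; rw [h] at hACeq; rw [hACeq] at hl
        apply hl
        have : A ++ [x] = A ++ [x] := rfl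
        rw [List.getLast?_concat]
      rw [hBdef j] at hACeq
      by_cases hb : P j <:+: W
      · rw [if_pos hb] at hACeq
        exact hPcnt j A x C hA hC hACeq
      · rw [if_neg hb] at hACeq
        have hPrev : P j = C.reverse ++ x :: A.reverse := by
          have := congrArg List.reverse hACeq
          rw [List.reverse_reverse] at this
          rw [this]
          simp
        exact hPcnt j C.reverse x A.reverse (by simp [hC]) (by simp [hA]) hPrev
    obtain ⟨X, Y, hXY, hside, _, _⟩ := ins W B hBinf hBnd hBdisj x hxW hcnt
    set W1 : List V := X ++ x :: ([x] ++ x :: Y) with hW1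
    have hW1cl : IsClosedWalk W1 := closed_insert_mid X [x] Y x (hXY ▸ hWcl)
    have hW1edges : walkEdges W1 = walkEdges W + (s(x, x) ::ₘ s(x, x) ::ₘ 0) := by
      rw [hW1, walkEdges_eq, edges_insert_loop, hXY, walkEdges_eq]
    have hW1inf : ∀ j, P j <:+: W1 ∨ (P j).reverse <:+: W1 := by
      intro j
      have hWin : ∀ (L2 : List V), (L2 <:+: X ++ [x] ∨ L2 <:+: x :: Y) → L2 <:+: W1 := by
        intro L2 hL2
        rcases hL2 with h | h
        · refine h.trans (List.IsPrefix.isInfix ⟨x :: x :: Y, ?_⟩)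
          rw [hW1]; simp
        · refine h.trans (List.IsSuffix.isInfix ⟨X ++ [x, x], ?_⟩)
          rw [hW1]; simp
      by_cases hb : P j <:+: W
      · have hBj : B j = P j := by rw [hBdef j, if_pos hb]
        left
        rw [← hBj]
        exact hWin _ (hside j)
      · have hBj : B j = (P j).reverse := by rw [hBdef j, if_neg hb]
        right
        rw [← hBj]
        exact hWin _ (hside j)
    have hW1mem : ∀ e' ∈ L.erase s(x, x), ∀ z, z ∈ e' → z ∈ W1 := by
      intro e' he' z hz
      have h1 : z ∈ W := hWmem e' (Finset.erase_subset _ _ he') z hz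
      rw [hXY] at h1
      rw [hW1]
      exact mem_insert_mid X [x] Y x h1
    have hW1cnt : ∀ j A z C, A ≠ [] → C ≠ [] → P j = A ++ z :: C → 2 ≤ W1.count z := by
      intro j A z C hA hC hPj
      have h1 := hPcnt j A z C hA hC hPj
      have h2 : W.count z ≤ W1.count z := by
        rw [hXY, hW1]
        exact count_insert_mid X [x] Y x z
      omega
    have hcard' : (L.erase s(x, x)).card < n := by
      rw [Finset.card_erase_of_mem he, hcard]
      have := Finset.card_pos.mpr ⟨_, he⟩
      omega
    obtain ⟨W2, hW2cl, hW2edges, hW2inf⟩ :=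
      IH (L.erase s(x, x)).card hcard' (L.erase s(x, x)) rfl
        (fun e' he' => hdiag e' (Finset.erase_subset _ _ he'))
        W1 hW1cl hW1mem r P hPnd hPdisj hW1inf hW1cnt
    refine ⟨W2, hW2cl, ?_, hW2inf⟩
    rw [hW2edges, hW1edges]
    have hval : L.val = s(x, x) ::ₘ (L.erase s(x, x)).val := by
      rw [Finset.erase_val]
      exact (Multiset.cons_erase he).symm
    rw [hval]
    simp only [← Multiset.singleton_add]
    abel

lemma chain_nondiag {l : List V} (hnd : l.Nodup) {e : Sym2 V} (he : e ∈ chain l) :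
    ¬ e.IsDiag := by
  obtain ⟨C, p, q, D, rfl, rfl⟩ := mem_chain_iff_split he
  rw [Sym2.mk_isDiag_iff]
  intro hpq
  subst hpq
  rw [List.nodup_append] at hnd
  have h1 := hnd.2.1
  rw [List.nodup_cons] at h1
  exact h1.1 (by simp)

end Stmt6

open Stmt6

/-- the double of a tree admits an Eulerian circuit containing each path
of a family of pairwise vertex-disjoint subpaths of the tree as a contiguous
simple subpath (traversed consecutively in one of the two directions). -/
theorem stmt6 {V : Type*} [Fintype V] [DecidableEq V]
    (T : Finset (Sym2 V)) (hT : IsSpanningTree T)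
    (r : ℕ) (P : Fin r → List V)
    (hPnd : ∀ j, (P j).Nodup)
    (hPsub : ∀ j, pathEdges (P j) ⊆ T)
    (hPdisj : ∀ i j, i ≠ j → Disjoint (P i).toFinset (P j).toFinset) :
    ∃ W : List V, IsClosedWalk W ∧ walkEdges W = T.val + T.val ∧
      ∀ j, (P j) <:+: W ∨ (P j).reverse <:+: W := by
  classical
  set Tc := T.filter (fun e => ¬ e.IsDiag) with hTcdef
  set L := T.filter (fun e => e.IsDiag) with hLdef
  have hval : Tc.val + L.val = T.val := by
    rw [hTcdef, hLdef, Finset.filter_val, Finset.filter_val]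
    have h := Multiset.filter_add_not (fun e : Sym2 V => ¬ e.IsDiag) T.val
    rw [show (Multiset.filter (fun a : Sym2 V => ¬¬a.IsDiag) T.val) =
        Multiset.filter (fun a : Sym2 V => a.IsDiag) T.val from
      Multiset.filter_congr (fun a _ => by tauto)] at h
    exact h
  have hGeq : SimpleGraph.fromEdgeSet ((Tc : Finset (Sym2 V)) : Set (Sym2 V)) =
      SimpleGraph.fromEdgeSet ((T : Finset (Sym2 V)) : Set (Sym2 V)) := by
    ext x y
    rw [SimpleGraph.fromEdgeSet_adj, SimpleGraph.fromEdgeSet_adj]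
    simp only [Finset.mem_coe, hTcdef, Finset.mem_filter, Sym2.mk_isDiag_iff]
    constructor
    · rintro ⟨⟨h1, _⟩, h2⟩; exact ⟨h1, h2⟩
    · rintro ⟨h1, h2⟩; exact ⟨⟨h1, h2⟩, h2⟩
  have hT' : (SimpleGraph.fromEdgeSet ((T : Finset (Sym2 V)) : Set (Sym2 V))).IsTree := hT
  have hconn0 : (SimpleGraph.fromEdgeSet ((T : Finset (Sym2 V)) : Set (Sym2 V))).Connected :=
    hT'.isConnected
  haveI hne : Nonempty V := hconn0.nonempty
  have hacTc : (SimpleGraph.fromEdgeSet ((Tc : Finset (Sym2 V)) : Set (Sym2 V))).IsAcyclic := by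
    rw [hGeq]; exact hT'.IsAcyclic
  have hndTc : ∀ e ∈ Tc, ¬ e.IsDiag := by
    intro e he; rw [hTcdef, Finset.mem_filter] at he; exact he.2
  have hconnTc : ∀ a b, a ∈ edgeVerts Tc → b ∈ edgeVerts Tc →
      (SimpleGraph.fromEdgeSet ((Tc : Finset (Sym2 V)) : Set (Sym2 V))).Reachable a b := by
    intro a b _ _
    rw [hGeq]
    exact hconn0.preconnected a b
  have hPsubTc : ∀ j, pathEdges (P j) ⊆ Tc := by
    intro j e he
    have h1 : e ∈ T := hPsub j he
    rw [pathEdges_eq, List.mem_toFinset] at he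
    rw [hTcdef, Finset.mem_filter]
    exact ⟨h1, chain_nondiag (hPnd j) he⟩
  by_cases hTc : Tc = ∅
  · -- V is a subsingleton
    have hbot : SimpleGraph.fromEdgeSet ((T : Finset (Sym2 V)) : Set (Sym2 V)) = ⊥ := by
      rw [← hGeq, hTc]
      simp [SimpleGraph.fromEdgeSet_empty]
    have hsub : ∀ x y : V, x = y := by
      intro x y
      have := hconn0.preconnected x y
      rw [hbot] at this
      exact SimpleGraph.reachable_bot.mp this
    obtain ⟨s⟩ := hne
    obtain ⟨W0, hsW0, hW0cl, hW0edges, hW0inf⟩ :=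
      main Tc.card Tc rfl hndTc hacTc hconnTc s (fun h => absurd hTc h)
        r P hPnd hPsubTc hPdisj (fun j x _ => Or.inr (hsub x s))
    have hallW0 : ∀ z : V, z ∈ W0 := fun z => (hsub z s) ▸ hsW0
    have hcnt0 : ∀ j A z C, A ≠ [] → C ≠ [] → P j = A ++ z :: C → 2 ≤ W0.count z := by
      intro j A z C hA hC hPj
      exfalso
      obtain ⟨a, c, hac2, _, _, he1, _⟩ := interior_two_edges (hPnd j) hPj hA hC
      have h1 : s(a, z) ∈ Tc := hPsubTc j (chain_mem_pathEdges he1)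
      rw [hTc] at h1
      simp at h1
    obtain ⟨W2, hW2cl, hW2edges, hW2inf⟩ :=
      loops L.card L rfl
        (fun e he => by rw [hLdef, Finset.mem_filter] at he; exact he.2)
        W0 hW0cl (fun e _ z _ => hallW0 z) r P hPnd hPdisj hW0inf hcnt0
    refine ⟨W2, hW2cl, ?_, hW2inf⟩
    rw [hW2edges, hW0edges, ← hval]
    abel
  · have hTcne : Tc.Nonempty := Finset.nonempty_iff_ne_empty.mpr hTc
    obtain ⟨e₀, he₀⟩ := hTcne
    have hall : ∀ x : V, x ∈ edgeVerts Tc := by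
      intro x
      obtain ⟨p, q, hpq⟩ : ∃ p q, e₀ = s(p, q) := by
        induction e₀ using Sym2.ind with
        | _ p q => exact ⟨p, q, rfl⟩
      have hpqne : p ≠ q := by
        intro h
        apply hndTc e₀ he₀
        rw [hpq, h]
        exact Sym2.mk_isDiag_iff.mpr rfl
      obtain ⟨z, hzx, hze⟩ : ∃ z, z ≠ x ∧ z ∈ e₀ := by
        by_cases hxp : x = p
        · exact ⟨q, fun h => hpqne (hxp.symm.trans h.symm), by rw [hpq]; simp⟩
        · exact ⟨p, fun h => hxp h.symm, by rw [hpq]; simp⟩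
      have hreach : (SimpleGraph.fromEdgeSet ((Tc : Finset (Sym2 V)) : Set (Sym2 V))).Reachable x z := by
        rw [hGeq]; exact hconn0.preconnected x z
      obtain ⟨w⟩ := hreach
      cases w with
      | nil => exact absurd rfl hzx
      | @cons _ c _ h q2 =>
        have h1 := h.1
        exact mem_edgeVerts.mpr ⟨s(x, c), by exact_mod_cast h1, by simp⟩
    obtain ⟨s⟩ := hne
    obtain ⟨W0, hsW0, hW0cl, hW0edges, hW0inf⟩ :=
      main Tc.card Tc rfl hndTc hacTc hconnTc s (fun _ => hall s)
        r P hPnd hPsubTc hPdisj (fun j x _ => Or.inl (hall x))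
    have hallW0 : ∀ z : V, z ∈ W0 := by
      intro z
      obtain ⟨e, he, hze⟩ := mem_edgeVerts.mp (hall z)
      obtain ⟨w', hw'⟩ : ∃ w', e = s(z, w') := Sym2.mem_iff_exists.mp hze
      have heW : e ∈ (chain W0 : Multiset (Sym2 V)) := by
        rw [← walkEdges_eq, hW0edges]
        exact Multiset.mem_add.mpr (Or.inl he)
      exact mem_of_mem_chain (Multiset.mem_coe.mp heW) hze
    have hcnt0 : ∀ j A z C, A ≠ [] → C ≠ [] → P j = A ++ z :: C → 2 ≤ W0.count z := by
      intro j A z C hA hC hPj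
      obtain ⟨a, c, hac2, hav2, hcv2, he1, he2⟩ := interior_two_edges (hPnd j) hPj hA hC
      have he1' : s(a, z) ∈ Tc := hPsubTc j (chain_mem_pathEdges he1)
      have he2' : s(c, z) ∈ Tc := by
        have := hPsubTc j (chain_mem_pathEdges he2)
        rwa [Sym2.eq_swap] at this
      have hEq : (chain W0 : Multiset (Sym2 V)) = Tc.val + Tc.val := by
        rw [← walkEdges_eq]; exact hW0edges
      have hc1 : 2 ≤ Multiset.count s(a, z) (chain W0 : Multiset (Sym2 V)) := by
        rw [hEq, Multiset.count_add]
        have h1 : 1 ≤ Multiset.count s(a, z) Tc.val :=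
          Multiset.one_le_count_iff_mem.mpr he1'
        omega
      have hc2 : 2 ≤ Multiset.count s(c, z) (chain W0 : Multiset (Sym2 V)) := by
        rw [hEq, Multiset.count_add]
        have h1 : 1 ≤ Multiset.count s(c, z) Tc.val :=
          Multiset.one_le_count_iff_mem.mpr he2'
        omega
      exact count_two hW0cl.1 hW0cl.2 hac2 hav2 hcv2 hc1 hc2
    obtain ⟨W2, hW2cl, hW2edges, hW2inf⟩ :=
      loops L.card L rfl
        (fun e he => by rw [hLdef, Finset.mem_filter] at he; exact he.2)
        W0 hW0cl (fun e _ z _ => hallW0 z) r P hPnd hPdisj hW0inf hcnt0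
    refine ⟨W2, hW2cl, ?_, hW2inf⟩
    rw [hW2edges, hW0edges, ← hval]
    abel
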